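/- Let G = (V,E) be connected, G' = (V,E') with E ⊆ E', and uv = e ∈ E' \ E. If the inequality 0 ≤ x_e defines a facet of Ξ_{GG'}, then: (a) no triangle of G' contains e; (b) every pair of u-v-cut-vertices other than {u,v} has distance at least 3 in G and at least 2 in G'; and (c) there is no triangle {s, s', t} in G' with {s,s'} a u-v-separating node set of G and t a u-v-cut-vertex of G. -/

import Mathlib

open SimpleGraph

variable {V : Type}

section Defs

variable [Fintype V] [DecidableEq V]

/-- A decomposition of a graph `G`: a partition of the vertex set into
blocks each of which induces a connected subgraph of `G`. -/
def IsDecomposition (G : SimpleGraph V) (P : Set (Set V)) : Prop :=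
  (∀ U ∈ P, ∀ W ∈ P, U ≠ W → Disjoint U W) ∧
  (∀ v : V, ∃ U ∈ P, v ∈ U) ∧
  (∀ U ∈ P, (G.induce U).Connected)

/-- An edge `e` straddles distinct blocks of `P` if no block contains both endpoints. -/
def Straddles (P : Set (Set V)) (e : Sym2 V) : Prop := ∀ U ∈ P, ¬ ∀ v ∈ e, v ∈ U

/-- The set of edges of `G` straddling distinct blocks of `P` (the map `φ_G`). -/
def cutEdges (G : SimpleGraph V) (P : Set (Set V)) : Set (Sym2 V) :=
  {e | e ∈ G.edgeSet ∧ Straddles P e}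

/-- A multicut of `G`: a set of edges meeting every cycle of `G` in a number of
edges different from 1. -/
def IsMulticut (G : SimpleGraph V) (M : Set (Sym2 V)) : Prop :=
  M ⊆ G.edgeSet ∧ ∀ ⦃u : V⦄ (c : G.Walk u u), c.IsCycle →
    (M ∩ {e | e ∈ c.edges}).ncard ≠ 1

/-- A multicut of `G'` lifted from `G`. -/
def IsLiftedMulticut (G G' : SimpleGraph V) (M : Set (Sym2 V)) : Prop :=
  ∃ P : Set (Set V), IsDecomposition G P ∧ M = cutEdges G' P

/-- The closed walk `c` has a chord in the graph `H`: an edge of `H` joining two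
vertices of `c` that is not an edge of `c`. -/
def HasChord (H : SimpleGraph V) {G : SimpleGraph V} {u : V} (c : G.Walk u u) : Prop :=
  ∃ e ∈ H.edgeSet, (∀ v ∈ e, v ∈ c.support) ∧ e ∉ c.edges

/-- A `vw`-cut of `G`: a minimal set of edges whose removal disconnects `v` from `w`. -/
def IsCut (G : SimpleGraph V) (v w : V) (C : Finset (Sym2 V)) : Prop :=
  ↑C ⊆ G.edgeSet ∧ ¬ (G.deleteEdges ↑C).Reachable v w ∧
    ∀ C' : Finset (Sym2 V), C' ⊂ C → (G.deleteEdges ↑C').Reachable v w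

/-- The cycle inequalities for cycles of `G`. -/
def CycleIneqs (G : SimpleGraph V) (x : Sym2 V → ℕ) : Prop :=
  ∀ ⦃u : V⦄ (c : G.Walk u u), c.IsCycle → ∀ e ∈ c.edges,
    x e ≤ ∑ e' ∈ c.edges.toFinset.erase e, x e'

/-- The path inequalities for pairs `vw ∈ E' \ E` and `vw`-paths of `G`. -/
def PathIneqs (G G' : SimpleGraph V) (x : Sym2 V → ℕ) : Prop :=
  ∀ v w : V, s(v, w) ∈ G'.edgeSet \ G.edgeSet →
    ∀ p : G.Walk v w, p.IsPath → x s(v, w) ≤ ∑ e ∈ p.edges.toFinset, x e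

/-- The cut inequalities for pairs `vw ∈ E' \ E` and `vw`-cuts of `G`. -/
def CutIneqs (G G' : SimpleGraph V) (x : Sym2 V → ℕ) : Prop :=
  ∀ v w : V, s(v, w) ∈ G'.edgeSet \ G.edgeSet →
    ∀ C : Finset (Sym2 V), IsCut G v w C → 1 - x s(v, w) ≤ ∑ e ∈ C, (1 - x e)

/-- Characteristic vector of an edge set, in `ℝ^{Sym2 V}`. -/
noncomputable def charVec (M : Set (Sym2 V)) : Sym2 V → ℝ :=
  fun e => by classical exact if e ∈ M then 1 else 0

/-- The characteristic vectors of multicuts of `G'` lifted from `G`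
(the vertex set of the lifted multicut polytope `Ξ_{GG'}`). -/
def liftedVectors (G G' : SimpleGraph V) : Set (Sym2 V → ℝ) :=
  {x | ∃ M : Set (Sym2 V), IsLiftedMulticut G G' M ∧ x = charVec M}

/-- The characteristic vectors of multicuts of `G'`. -/
def multicutVectors (G' : SimpleGraph V) : Set (Sym2 V → ℝ) :=
  {x | ∃ M : Set (Sym2 V), IsMulticut G' M ∧ x = charVec M}

/-- The inequality `ineq`, with associated equality `eqn`, defines a facet of the
lifted multicut polytope `Ξ_{GG'}` (which has dimension `|E'|`): it is valid, and
the face it induces has dimension `|E'| - 1`. -/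
def DefinesFacet (G G' : SimpleGraph V) (ineq eqn : (Sym2 V → ℝ) → Prop) : Prop :=
  (∀ x ∈ liftedVectors G G', ineq x) ∧
  Module.finrank ℝ (vectorSpan ℝ {x ∈ liftedVectors G G' | eqn x}) = G'.edgeSet.ncard - 1

/-- Facet-defining for the multicut polytope `Ξ_{G'}`. -/
def DefinesFacetMC (G' : SimpleGraph V) (ineq eqn : (Sym2 V → ℝ) → Prop) : Prop :=
  (∀ x ∈ multicutVectors G', ineq x) ∧
  Module.finrank ℝ (vectorSpan ℝ {x ∈ multicutVectors G' | eqn x}) = G'.edgeSet.ncard - 1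

/-- `u` is a `v`-`w`-cut-vertex: it lies on every `vw`-path of `G`. -/
def IsCutVertex (G : SimpleGraph V) (v w u : V) : Prop :=
  ∀ p : G.Walk v w, p.IsPath → u ∈ p.support

/-- `S` is a `u`-`v`-separating node set of `G`. -/
def IsSeparatingSet (G : SimpleGraph V) (u v : V) (S : Set V) : Prop :=
  u ∉ S ∧ v ∉ S ∧ ∀ p : G.Walk u v, p.IsPath → ∃ s ∈ S, s ∈ p.support

/-- The side of the cut `C` containing `v`. -/
def vSide (G : SimpleGraph V) (C : Finset (Sym2 V)) (v : V) : Set V :=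
  {u | (G.deleteEdges ↑C).Reachable v u}

/-- The component of `G` induced by `U` is properly `(vw,C)`-connected. -/
def ProperlyConnected (G : SimpleGraph V) (v w : V) (C : Finset (Sym2 V)) (U : Set V) : Prop :=
  (G.induce U).Connected ∧ v ∈ U ∧ w ∈ U ∧
    ({e | e ∈ C ∧ ∀ u ∈ e, u ∈ U} : Set (Sym2 V)).ncard = 1

/-- The component of `G` induced by `U` is improperly `(vw,C)`-connected. -/
def ImproperlyConnected (G : SimpleGraph V) (v w : V) (C : Finset (Sym2 V)) (U : Set V) : Prop :=
  (G.induce U).Connected ∧ (U ⊆ vSide G C v ∨ U ⊆ vSide G C w)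

/-- `(vw,C)`-connected: properly or improperly so. -/
def VWCConnected (G : SimpleGraph V) (v w : V) (C : Finset (Sym2 V)) (U : Set V) : Prop :=
  ProperlyConnected G v w C U ∨ ImproperlyConnected G v w C U

/-- The vertex set of the maximal component of `H` containing `u`. -/
def compSupp (H : SimpleGraph V) (u : V) : Set V := {u' | H.Reachable u u'}

end Defs
section Driver
variable [Fintype V] [DecidableEq V]

/-- Submodule of functions supported on a set of edges. -/
def suppSub (s : Set (Sym2 V)) : Submodule ℝ (Sym2 V → ℝ) where
  carrier := {y | ∀ f ∉ s, y f = 0}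
  add_mem' := by intro a b ha hb f hf; simp [ha f hf, hb f hf]
  zero_mem' := by intro f hf; rfl
  smul_mem' := by intro c a ha f hf; simp [ha f hf]

lemma finrank_suppSub_le (s : Set (Sym2 V)) :
    Module.finrank ℝ (suppSub (V := V) s) ≤ s.ncard := by
  classical
  have : Fintype s := Fintype.ofFinite _
  have hcard : s.ncard = Fintype.card s := by
    rw [Set.ncard_eq_toFinset_card', Set.toFinset_card]
  rw [hcard]
  set r : (suppSub (V := V) s) →ₗ[ℝ] (s → ℝ) :=
    (LinearMap.pi (fun i : s => LinearMap.proj (i : Sym2 V))).domRestrict _ with hr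
  have hinj : Function.Injective r := by
    intro a b hab
    ext f
    by_cases hf : f ∈ s
    · exact congrFun hab ⟨f, hf⟩
    · rw [a.2 f hf, b.2 f hf]
  calc Module.finrank ℝ (suppSub (V := V) s)
      ≤ Module.finrank ℝ (s → ℝ) := LinearMap.finrank_le_finrank_of_injective hinj
    _ = Fintype.card s := Module.finrank_fintype_fun_eq_card ℝ

lemma lifted_supp {G G' : SimpleGraph V} {x : Sym2 V → ℝ}
    (hx : x ∈ liftedVectors G G') : ∀ f ∉ G'.edgeSet, x f = 0 := by
  obtain ⟨M, ⟨P, hP, rfl⟩, rfl⟩ := hx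
  intro f hf
  have : f ∉ cutEdges G' P := fun h => hf h.1
  simp [charVec, this]

set_option synthInstance.maxHeartbeats 1000000 in
set_option maxHeartbeats 2000000 in
lemma facet_rank_absurd (G G' : SimpleGraph V) {u v : V}
    (he : s(u, v) ∈ G'.edgeSet \ G.edgeSet)
    (hfacet : DefinesFacet G G' (fun x => 0 ≤ x s(u, v)) (fun x => x s(u, v) = 0))
    (L : (Sym2 V → ℝ) →ₗ[ℝ] ℝ)
    (hL0 : ∀ x ∈ liftedVectors G G', x s(u, v) = 0 → L x = 0)
    (hLe : L (fun f => if f = s(u, v) then (1 : ℝ) else 0) = 0)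
    (b : Sym2 V → ℝ) (hbsupp : ∀ f ∉ G'.edgeSet, b f = 0)
    (hbe : b s(u, v) = 0) (hLb : L b ≠ 0) : False := by
  classical
  set e₀ : Sym2 V := s(u, v) with he₀
  set a : Sym2 V → ℝ := fun f => if f = e₀ then 1 else 0 with ha
  have ha_mem : a ∈ suppSub G'.edgeSet := by
    intro f hf
    simp only [ha]
    exact if_neg (by rintro rfl; exact hf he.1)
  have hb_mem : b ∈ suppSub G'.edgeSet := hbsupp
  set Φ : (Sym2 V → ℝ) →ₗ[ℝ] ℝ × ℝ := (LinearMap.proj e₀).prod L with hΦ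
  set D := Φ.domRestrict (suppSub (V := V) G'.edgeSet) with hD
  have hsurj : Function.Surjective D := by
    rintro ⟨p, q⟩
    refine ⟨p • ⟨a, ha_mem⟩ + (q / L b) • ⟨b, hb_mem⟩, ?_⟩
    have hae : a e₀ = 1 := if_pos rfl
    simp only [hD, hΦ, LinearMap.domRestrict_apply, map_add, map_smul,
      LinearMap.prod_apply, LinearMap.proj_apply, Function.prod]
    rw [hae, hbe, hLe]
    have : (q / L b) * L b = q := div_mul_cancel₀ q hLb
    simp [Prod.ext_iff, this]
  have hrange : LinearMap.range D = ⊤ := LinearMap.range_eq_top.mpr hsurj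
  have hrn := LinearMap.finrank_range_add_finrank_ker D
  rw [hrange, finrank_top] at hrn
  have h2 : Module.finrank ℝ (ℝ × ℝ) = 2 := by
    simp [Module.finrank_prod]
  rw [h2] at hrn
  -- the face lies in W
  set W := (LinearMap.ker D).map (suppSub (V := V) G'.edgeSet).subtype with hW
  have hWrank : Module.finrank ℝ W = Module.finrank ℝ (LinearMap.ker D) :=
    ((Submodule.equivMapOfInjective _ (Submodule.injective_subtype _)
      (LinearMap.ker D)).symm.finrank_eq)
  have hmemW : ∀ x ∈ {x ∈ liftedVectors G G' | x e₀ = 0}, x ∈ W := by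
    rintro x ⟨hx, hx0⟩
    have hs : x ∈ suppSub (V := V) G'.edgeSet := lifted_supp hx
    refine ⟨⟨x, hs⟩, ?_, rfl⟩
    have : Φ x = 0 := by
      simp only [hΦ, LinearMap.prod_apply, Function.prod, LinearMap.proj_apply]
      rw [hx0, hL0 x hx hx0]
      rfl
    simpa [hD, LinearMap.mem_ker, LinearMap.domRestrict_apply] using this
  have hspan : vectorSpan ℝ {x ∈ liftedVectors G G' | x e₀ = 0} ≤ W := by
    rw [vectorSpan_def]
    refine Submodule.span_le.mpr ?_
    rintro y hy
    obtain ⟨x1, hx1, x2, hx2, rfl⟩ := Set.mem_sub.mp hy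
    exact W.sub_mem (hmemW _ hx1) (hmemW _ hx2)
  have hfr : Module.finrank ℝ (vectorSpan ℝ {x ∈ liftedVectors G G' | x e₀ = 0})
      ≤ Module.finrank ℝ W := Submodule.finrank_mono hspan
  -- cardinality bound
  obtain ⟨f, hf⟩ : ∃ f, b f ≠ 0 := by
    by_contra h
    push_neg at h
    exact hLb (by rw [show b = 0 from funext h, map_zero])
  have hfE : f ∈ G'.edgeSet := by
    by_contra hc
    exact hf (hbsupp f hc)
  have hfne : f ≠ e₀ := by rintro rfl; exact hf hbe
  have hn2 : 2 ≤ G'.edgeSet.ncard := by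
    have hsub2 : ({e₀, f} : Set (Sym2 V)) ⊆ G'.edgeSet := by
      rintro g hg
      rcases hg with rfl | rfl
      · exact he.1
      · exact hfE
    have := Set.ncard_le_ncard hsub2 (Set.toFinite _)
    rwa [Set.ncard_pair (Ne.symm hfne)] at this
  have hub := finrank_suppSub_le (V := V) G'.edgeSet
  have hface := hfacet.2
  clear_value e₀ a Φ D W
  have h3 : Module.finrank ℝ (LinearMap.ker D) ≤ G'.edgeSet.ncard - 2 := by clear hfr hface; omega
  have key : G'.edgeSet.ncard - 1 ≤ G'.edgeSet.ncard - 2 :=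
    calc G'.edgeSet.ncard - 1
        = Module.finrank ℝ (vectorSpan ℝ {x ∈ liftedVectors G G' | x e₀ = 0}) := hface.symm
      _ ≤ Module.finrank ℝ W := hfr
      _ = Module.finrank ℝ (LinearMap.ker D) := hWrank
      _ ≤ G'.edgeSet.ncard - 2 := h3
  clear hfr hface
  omega
end Driver
section Comb
variable [Fintype V] [DecidableEq V]

omit [Fintype V] [DecidableEq V] in
lemma exists_block {G G' : SimpleGraph V} {u v : V} (he' : s(u, v) ∈ G'.edgeSet)
    {x : Sym2 V → ℝ} (hx : x ∈ liftedVectors G G') (hx0 : x s(u, v) = 0) :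
    ∃ P U, IsDecomposition G P ∧ U ∈ P ∧ u ∈ U ∧ v ∈ U ∧
      ∀ a b : V, s(a, b) ∈ G'.edgeSet → a ∈ U →
        (b ∈ U → x s(a, b) = 0) ∧ (b ∉ U → x s(a, b) = 1) := by
  classical
  obtain ⟨M, ⟨P, hP, rfl⟩, rfl⟩ := hx
  have h0 : s(u, v) ∉ cutEdges G' P := by
    intro h; simp [charVec, h] at hx0
  have hns : ¬ Straddles P s(u, v) := fun hs => h0 ⟨he', hs⟩
  rw [Straddles] at hns; push_neg at hns
  obtain ⟨U, hU, hUall⟩ := hns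
  refine ⟨P, U, hP, hU, hUall u (by simp), hUall v (by simp), ?_⟩
  intro a b hab ha
  constructor
  · intro hb
    have hnc : s(a, b) ∉ cutEdges G' P := by
      rintro ⟨-, hs⟩
      exact hs U hU (by
        intro w hw; rcases Sym2.mem_iff.mp hw with rfl | rfl
        exacts [ha, hb])
    simp [charVec, hnc]
  · intro hb
    have hc : s(a, b) ∈ cutEdges G' P := by
      refine ⟨hab, ?_⟩
      intro W hW hWall
      have haW : a ∈ W := hWall a (by simp)
      have hbW : b ∈ W := hWall b (by simp)
      by_cases hUW : U = W
      · exact hb (hUW ▸ hbW)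
      · exact (Set.disjoint_left.mp (hP.1 U hU W hW hUW) ha) haW
    simp [charVec, hc]

omit [Fintype V] in
lemma block_path {G : SimpleGraph V} {P : Set (Set V)} (hP : IsDecomposition G P)
    {U : Set V} (hU : U ∈ P) {u v : V} (hu : u ∈ U) (hv : v ∈ U) :
    ∃ p : G.Walk u v, p.IsPath ∧ ∀ w ∈ p.support, w ∈ U := by
  obtain ⟨w⟩ := (hP.2.2 U hU).preconnected ⟨u, hu⟩ ⟨v, hv⟩
  let w' : G.Walk u v := w.map (SimpleGraph.Embedding.induce U).toHom
  refine ⟨w'.bypass, w'.bypass_isPath, ?_⟩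
  intro t ht
  have hmem := w'.support_bypass_subset ht
  replace hmem : t ∈ w.support.map (Embedding.induce (G := G) U).toHom := by
    rw [← Walk.support_map]; exact hmem
  obtain ⟨⟨t', ht'⟩, -, rfl⟩ := List.mem_map.mp hmem
  exact ht'

omit [Fintype V] [DecidableEq V] in
lemma short_walk3 {G : SimpleGraph V} {a b : V} (hab : a ≠ b) (h : G.Reachable a b)
    (hlt : G.dist a b < 3) :
    G.Adj a b ∨ ∃ w, G.Adj a w ∧ G.Adj w b := by
  obtain ⟨p, hp⟩ := h.exists_walk_length_eq_dist
  match p, hp with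
  | Walk.nil, hp => exact absurd rfl hab
  | Walk.cons h1 Walk.nil, hp => exact Or.inl h1
  | Walk.cons h1 (Walk.cons h2 Walk.nil), hp => exact Or.inr ⟨_, h1, h2⟩
  | Walk.cons h1 (Walk.cons h2 (Walk.cons h3 q)), hp => simp [Walk.length_cons] at hp; omega

omit [Fintype V] [DecidableEq V] in
lemma short_walk2 {G : SimpleGraph V} {a b : V} (hab : a ≠ b) (h : G.Reachable a b)
    (hlt : G.dist a b < 2) : G.Adj a b := by
  obtain ⟨p, hp⟩ := h.exists_walk_length_eq_dist
  match p, hp with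
  | Walk.nil, hp => exact absurd rfl hab
  | Walk.cons h1 Walk.nil, hp => exact h1
  | Walk.cons h1 (Walk.cons h2 q), hp => simp [Walk.length_cons] at hp; omega

end Comb
/-- For `uv = e ∈ E' \ E`, if `0 ≤ x_e` defines a facet of
`Ξ_{GG'}`, then (a) no triangle of `G'` contains `e`; (b) every pair of
`u`-`v`-cut-vertices other than `{u,v}` has distance at least 3 in `G` and at
least 2 in `G'`; (c) there is no triangle `{s,s',t}` of `G'` with `{s,s'}` a
`u`-`v`-separating node set and `t` a `u`-`v`-cut-vertex of `G`. -/
theorem box_lower_facet_lifted_edge_necessary [Fintype V] [DecidableEq V]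
    (G G' : SimpleGraph V) (hG : G.Connected) (hle : G ≤ G')
    (u v : V) (he : s(u, v) ∈ G'.edgeSet \ G.edgeSet)
    (hfacet : DefinesFacet G G' (fun x => 0 ≤ x s(u, v)) (fun x => x s(u, v) = 0)) :
    (¬ ∃ t : V, G'.Adj u t ∧ G'.Adj v t) ∧
    (∀ u' v' : V, u' ≠ v' → IsCutVertex G u v u' → IsCutVertex G u v v' →
      s(u', v') ≠ s(u, v) → 3 ≤ G.dist u' v' ∧ 2 ≤ G'.dist u' v') ∧
    (¬ ∃ s s' t : V, G'.Adj s s' ∧ G'.Adj s t ∧ G'.Adj s' t ∧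
      IsSeparatingSet G u v {s, s'} ∧ IsCutVertex G u v t) := by
  classical
  have huv : u ≠ v := (G'.mem_edgeSet.mp he.1).ne
  refine ⟨?_, ?_, ?_⟩
  · -- part (a)
    rintro ⟨t, hut, hvt⟩
    have htu : t ≠ u := hut.ne'
    have htv : t ≠ v := hvt.ne'
    have h1 : s(u, t) ≠ s(u, v) := by simp [Sym2.eq_iff]; tauto
    have h2 : s(v, t) ≠ s(u, v) := by simp [Sym2.eq_iff]; tauto
    have h3 : s(v, t) ≠ s(u, t) := by simp [Sym2.eq_iff]; tauto
    refine facet_rank_absurd G G' he hfacet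
      ((LinearMap.proj s(u, t) : (Sym2 V → ℝ) →ₗ[ℝ] ℝ) - LinearMap.proj s(v, t)) ?_ ?_
      (fun f => if f = s(u, t) then 1 else 0) ?_ ?_ ?_
    · intro x hx hx0
      obtain ⟨P, U, hP, hU, hu, hv, hval⟩ := exists_block he.1 hx hx0
      simp only [LinearMap.sub_apply, LinearMap.proj_apply]
      by_cases ht : t ∈ U
      · rw [(hval u t (G'.mem_edgeSet.mpr hut) hu).1 ht,
          (hval v t (G'.mem_edgeSet.mpr hvt) hv).1 ht]; ring
      · rw [(hval u t (G'.mem_edgeSet.mpr hut) hu).2 ht,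
          (hval v t (G'.mem_edgeSet.mpr hvt) hv).2 ht]; ring
    · simp only [LinearMap.sub_apply, LinearMap.proj_apply]
      rw [if_neg h1, if_neg h2]; ring
    · intro f hf
      refine if_neg ?_
      rintro rfl; exact hf (G'.mem_edgeSet.mpr hut)
    · exact if_neg (Ne.symm h1)
    · simp only [LinearMap.sub_apply, LinearMap.proj_apply]
      rw [if_neg h3]; norm_num
  · -- part (b)
    intro u' v' hne hcu hcv hneq
    have hblk : ∀ {x : Sym2 V → ℝ}, x ∈ liftedVectors G G' → x s(u, v) = 0 →
        ∃ U : Set V, u' ∈ U ∧ v' ∈ U ∧ ∀ a b : V, s(a, b) ∈ G'.edgeSet → a ∈ U →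
          (b ∈ U → x s(a, b) = 0) ∧ (b ∉ U → x s(a, b) = 1) := by
      intro x hx hx0
      obtain ⟨P, U, hP, hU, hu, hv, hval⟩ := exists_block he.1 hx hx0
      obtain ⟨p, hp, hpU⟩ := block_path hP hU hu hv
      exact ⟨U, hpU u' (hcu p hp), hpU v' (hcv p hp), hval⟩
    have hadj : ¬ G'.Adj u' v' := by
      intro hadj
      refine facet_rank_absurd G G' he hfacet
        (LinearMap.proj s(u', v') : (Sym2 V → ℝ) →ₗ[ℝ] ℝ) ?_ ?_
        (fun f => if f = s(u', v') then 1 else 0) ?_ ?_ ?_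
      · intro x hx hx0
        obtain ⟨U, hu', hv', hval⟩ := hblk hx hx0
        simpa using (hval u' v' (G'.mem_edgeSet.mpr hadj) hu').1 hv'
      · simp only [LinearMap.proj_apply]; exact if_neg hneq
      · intro f hf; exact if_neg (by rintro rfl; exact hf (G'.mem_edgeSet.mpr hadj))
      · exact if_neg (Ne.symm hneq)
      · simp
    constructor
    · by_contra hlt
      push_neg at hlt
      rcases short_walk3 hne (hG.preconnected u' v') hlt with h | ⟨w, h1, h2⟩
      · exact hadj (hle h)
      · have hw1 : u' ≠ w := h1.ne
        have hne12 : s(w, v') ≠ s(u', w) := by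
          intro hh
          rw [Sym2.eq_iff] at hh
          rcases hh with ⟨rfl, rfl⟩ | ⟨-, rfl⟩ <;> exact hne rfl
        have g1 : s(u', w) ∈ G'.edgeSet := G'.mem_edgeSet.mpr (hle h1)
        have g2 : s(v', w) ∈ G'.edgeSet := G'.mem_edgeSet.mpr (hle h2.symm)
        have k1 : s(u', w) ≠ s(u, v) := by
          rintro hh; exact he.2 (hh ▸ G.mem_edgeSet.mpr h1)
        have k2 : s(w, v') ≠ s(u, v) := by
          rintro hh; exact he.2 (hh ▸ G.mem_edgeSet.mpr h2)
        refine facet_rank_absurd G G' he hfacet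
          ((LinearMap.proj s(u', w) : (Sym2 V → ℝ) →ₗ[ℝ] ℝ) - LinearMap.proj s(w, v')) ?_ ?_
          (fun f => if f = s(u', w) then 1 else 0) ?_ ?_ ?_
        · intro x hx hx0
          obtain ⟨U, hu', hv', hval⟩ := hblk hx hx0
          simp only [LinearMap.sub_apply, LinearMap.proj_apply]
          have e2 : s(w, v') = s(v', w) := Sym2.eq_swap
          by_cases hwU : w ∈ U
          · rw [(hval u' w g1 hu').1 hwU, e2, (hval v' w g2 hv').1 hwU]; ring
          · rw [(hval u' w g1 hu').2 hwU, e2, (hval v' w g2 hv').2 hwU]; ring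
        · simp only [LinearMap.sub_apply, LinearMap.proj_apply]
          rw [if_neg k1, if_neg k2]; ring
        · intro f hf; exact if_neg (by rintro rfl; exact hf g1)
        · exact if_neg (Ne.symm k1)
        · simp only [LinearMap.sub_apply, LinearMap.proj_apply]
          rw [if_neg hne12]; norm_num
    · by_contra hlt
      push_neg at hlt
      exact hadj (short_walk2 hne (Reachable.mono hle (hG.preconnected u' v')) hlt)
  · -- part (c)
    rintro ⟨s, s', t, hss', hst, hs't, hsep, hcut⟩
    have hs_ne : s ≠ s' := hss'.ne
    have hst_ne : s ≠ t := hst.ne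
    have hs't_ne : s' ≠ t := hs't.ne
    have hsu : s ≠ u := fun h => hsep.1 (by subst h; simp)
    have hs'u : s' ≠ u := fun h => hsep.1 (by subst h; simp)
    have hsv : s ≠ v := fun h => hsep.2.1 (by subst h; simp)
    have hs'v : s' ≠ v := fun h => hsep.2.1 (by subst h; simp)
    have g1 : s(s, s') ∈ G'.edgeSet := G'.mem_edgeSet.mpr hss'
    have g1' : s(s', s) ∈ G'.edgeSet := G'.mem_edgeSet.mpr hss'.symm
    have g2 : s(s, t) ∈ G'.edgeSet := G'.mem_edgeSet.mpr hst
    have g2' : s(t, s) ∈ G'.edgeSet := G'.mem_edgeSet.mpr hst.symm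
    have g3 : s(s', t) ∈ G'.edgeSet := G'.mem_edgeSet.mpr hs't
    have g3' : s(t, s') ∈ G'.edgeSet := G'.mem_edgeSet.mpr hs't.symm
    have k1 : s(s, s') ≠ s(u, v) := by simp [Sym2.eq_iff]; tauto
    have k2 : s(s, t) ≠ s(u, v) := by simp [Sym2.eq_iff]; tauto
    have k3 : s(s', t) ≠ s(u, v) := by simp [Sym2.eq_iff]; tauto
    have m2 : s(s, t) ≠ s(s, s') := by simp [Sym2.eq_iff]; tauto
    have m3 : s(s', t) ≠ s(s, s') := by simp [Sym2.eq_iff]; tauto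
    refine facet_rank_absurd G G' he hfacet
      ((LinearMap.proj s(s, s') : (Sym2 V → ℝ) →ₗ[ℝ] ℝ) - LinearMap.proj s(s, t)
        - LinearMap.proj s(s', t)) ?_ ?_
      (fun f => if f = s(s, s') then 1 else 0) ?_ ?_ ?_
    · intro x hx hx0
      obtain ⟨P, U, hP, hU, hu, hv, hval⟩ := exists_block he.1 hx hx0
      obtain ⟨p, hp, hpU⟩ := block_path hP hU hu hv
      have htU : t ∈ U := hpU t (hcut p hp)
      obtain ⟨z, hz, hzsup⟩ := hsep.2.2 p hp
      have hzU : z ∈ U := hpU z hzsup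
      simp only [LinearMap.sub_apply, LinearMap.proj_apply]
      have e1 : s(s, s') = s(s', s) := Sym2.eq_swap
      have e2 : s(s, t) = s(t, s) := Sym2.eq_swap
      have e3 : s(s', t) = s(t, s') := Sym2.eq_swap
      by_cases hsU : s ∈ U <;> by_cases hs'U : s' ∈ U
      · rw [(hval s s' g1 hsU).1 hs'U, (hval s t g2 hsU).1 htU,
          (hval s' t g3 hs'U).1 htU]; ring
      · rw [(hval s s' g1 hsU).2 hs'U, (hval s t g2 hsU).1 htU, e3,
          (hval t s' g3' htU).2 hs'U]; ring
      · rw [e1, (hval s' s g1' hs'U).2 hsU, e2, (hval t s g2' htU).2 hsU,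
          (hval s' t g3 hs'U).1 htU]; ring
      · rcases hz with rfl | rfl
        · exact absurd hzU hsU
        · exact absurd hzU hs'U
    · simp only [LinearMap.sub_apply, LinearMap.proj_apply]
      rw [if_neg k1, if_neg k2, if_neg k3]; ring
    · intro f hf; exact if_neg (by rintro rfl; exact hf g1)
    · exact if_neg (Ne.symm k1)
    · simp only [LinearMap.sub_apply, LinearMap.proj_apply]
      rw [if_neg m2, if_neg m3]; norm_num
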